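/- For every $s$ with $\tfrac{1}{2} \leq s \leq \tfrac{2}{3}$ there exists a constant $C > 0$ such that the following holds. Let $n_1, n_2, n_3$ be nonzero integers with $n_2 + n_3 \neq 0$ and $|n_1| \geq 4\max(|n_2|, |n_3|)$, and set $n := n_1 + n_2 + n_3$ and $H_3 := (n_1 + n_2)(n_2 + n_3)(n_3 + n_1)$. Then $\langle n_1\rangle^{s}\, \langle n_2\rangle^{s} \;\leq\; C\, \langle n\rangle^{s}\, \langle n_3\rangle^{1-s}\, \langle H_3\rangle^{1/3}$. -/
import Mathlib


noncomputable def jb (m : ℤ) : ℝ := Real.sqrt (1 + (m : ℝ) ^ 2)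

lemma one_le_jb (m : ℤ) : 1 ≤ jb m := by
  have h : Real.sqrt 1 ≤ Real.sqrt (1 + (m:ℝ) ^ 2) :=
    Real.sqrt_le_sqrt (by nlinarith [sq_nonneg ((m:ℝ))])
  simpa [jb] using h

lemma jb_nonneg (m : ℤ) : 0 ≤ jb m := le_trans zero_le_one (one_le_jb m)

lemma abs_le_jb (m : ℤ) : |(m:ℝ)| ≤ jb m := by
  rw [jb, ← Real.sqrt_sq_eq_abs]
  exact Real.sqrt_le_sqrt (by nlinarith)

lemma jb_sq (m : ℤ) : jb m ^ (2:ℝ) = 1 + (m:ℝ) ^ 2 := by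
  rw [show (2:ℝ) = ((2:ℕ):ℝ) by norm_num, Real.rpow_natCast, jb,
    Real.sq_sqrt (by positivity)]

theorem stmt_14 :
    ∀ s : ℝ, 1/2 ≤ s → s ≤ 2/3 →
      ∃ C : ℝ, 0 < C ∧ ∀ n₁ n₂ n₃ : ℤ, n₁ ≠ 0 → n₂ ≠ 0 → n₃ ≠ 0 → n₂ + n₃ ≠ 0 →
        4 * max |n₂| |n₃| ≤ |n₁| →
        jb n₁ ^ s * jb n₂ ^ s
          ≤ C * jb (n₁ + n₂ + n₃) ^ s * jb n₃ ^ (1 - s)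
              * jb ((n₁ + n₂) * (n₂ + n₃) * (n₃ + n₁)) ^ ((1:ℝ)/3) := by
  intro s hs1 hs2
  refine ⟨2, by norm_num, ?_⟩
  intro n₁ n₂ n₃ h1 h2 h3 h23 hmax
  set n := n₁ + n₂ + n₃ with hn
  set H := (n₁ + n₂) * (n₂ + n₃) * (n₃ + n₁) with hH
  have hs0 : 0 ≤ s := by linarith
  -- integer inequalities
  have h2pos : 1 ≤ |n₂| := Int.one_le_abs h2
  have h3pos : 1 ≤ |n₃| := Int.one_le_abs h3
  have h23pos : 1 ≤ |n₂ + n₃| := Int.one_le_abs h23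
  have h4a : 4 * |n₂| ≤ |n₁| :=
    le_trans (mul_le_mul_of_nonneg_left (le_max_left _ _) (by norm_num)) hmax
  have h4b : 4 * |n₃| ≤ |n₁| :=
    le_trans (mul_le_mul_of_nonneg_left (le_max_right _ _) (by norm_num)) hmax
  have key : ∀ a b : ℤ, |a| ≤ |a + b| + |b| := by
    intro a b
    have h := abs_add_le (a + b) (-b)
    rw [abs_neg] at h
    simpa using h
  have hA : 3 * |n₂| ≤ |n₁ + n₂| := by
    have h' := key n₁ n₂
    omega
  have hB : 3 * |n₂| ≤ |n₃ + n₁| := by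
    have h' := key n₁ n₃
    have hcomm : |n₃ + n₁| = |n₁ + n₃| := by rw [add_comm]
    omega
  have hHabs : 9 * n₂ ^ 2 ≤ |H| := by
    have e1 : 3 * |n₂| * 1 ≤ |n₁ + n₂| * |n₂ + n₃| :=
      mul_le_mul hA h23pos (by norm_num) (abs_nonneg _)
    have e2 : (3 * |n₂| * 1) * (3 * |n₂|) ≤ (|n₁ + n₂| * |n₂ + n₃|) * |n₃ + n₁| :=
      mul_le_mul e1 hB (by positivity) (by positivity)
    rw [hH, abs_mul, abs_mul]
    nlinarith [sq_abs n₂, e2]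
  have hn1n : |n₁| ≤ 2 * |n| := by
    have h' := key n₁ (n₂ + n₃)
    have heq : n₁ + (n₂ + n₃) = n := by rw [hn]; ring
    rw [heq] at h'
    have h2' := abs_add_le n₂ n₃
    omega
  -- real versions
  have hjn1 : jb n₁ ≤ 2 * jb n := by
    have h4 : Real.sqrt 4 = 2 := by
      rw [show (4:ℝ) = 2 ^ 2 by norm_num, Real.sqrt_sq (by norm_num)]
    have hmul : Real.sqrt (4 * (1 + (n:ℝ) ^ 2)) = 2 * Real.sqrt (1 + (n:ℝ) ^ 2) := by
      rw [Real.sqrt_mul (by norm_num), h4]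
    rw [jb, jb, ← hmul]
    apply Real.sqrt_le_sqrt
    have hsq : n₁ ^ 2 ≤ 4 * n ^ 2 := by
      nlinarith [sq_abs n₁, sq_abs n, abs_nonneg n, hn1n]
    have : ((n₁:ℝ)) ^ 2 ≤ 4 * (n:ℝ) ^ 2 := by exact_mod_cast hsq
    nlinarith
  -- step 1 : jb n₁ ^ s ≤ 2 * jb n ^ s
  have step1 : jb n₁ ^ s ≤ 2 * jb n ^ s := by
    calc jb n₁ ^ s ≤ (2 * jb n) ^ s :=
          Real.rpow_le_rpow (jb_nonneg _) hjn1 hs0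
      _ = 2 ^ s * jb n ^ s := Real.mul_rpow (by norm_num) (jb_nonneg _)
      _ ≤ 2 * jb n ^ s := by
          gcongr
          · exact Real.rpow_nonneg (jb_nonneg _) s
          · calc (2:ℝ) ^ s ≤ 2 ^ (1:ℝ) :=
                Real.rpow_le_rpow_of_exponent_le (by norm_num) (by linarith)
              _ = 2 := Real.rpow_one 2
  -- step 2 : jb n₂ ^ s ≤ jb H ^ (1/3)
  have step2 : jb n₂ ^ s ≤ jb H ^ ((1:ℝ)/3) := by
    have e1 : jb n₂ ^ s ≤ jb n₂ ^ ((2:ℝ)/3) :=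
      Real.rpow_le_rpow_of_exponent_le (one_le_jb _) (by linarith)
    have e2 : (jb n₂ ^ (2:ℝ)) ^ ((1:ℝ)/3) = jb n₂ ^ ((2:ℝ)/3) := by
      rw [← Real.rpow_mul (jb_nonneg _)]; norm_num
    have e3 : jb n₂ ^ (2:ℝ) ≤ jb H := by
      rw [jb_sq]
      have hH' : (9:ℝ) * (n₂:ℝ) ^ 2 ≤ |(H:ℝ)| := by
        rw [← Int.cast_abs]; exact_mod_cast hHabs
      have h1' : (1:ℝ) ≤ |(n₂:ℝ)| := by
        rw [← Int.cast_abs]; exact_mod_cast h2pos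
      have : (1:ℝ) + (n₂:ℝ) ^ 2 ≤ 9 * (n₂:ℝ) ^ 2 := by
        nlinarith [sq_abs (n₂:ℝ)]
      linarith [abs_le_jb H]
    calc jb n₂ ^ s ≤ (jb n₂ ^ (2:ℝ)) ^ ((1:ℝ)/3) := by rw [e2]; exact e1
      _ ≤ jb H ^ ((1:ℝ)/3) :=
        Real.rpow_le_rpow (Real.rpow_nonneg (jb_nonneg _) _) e3 (by norm_num)
  -- step 3 : 1 ≤ jb n₃ ^ (1-s)
  have step3 : (1:ℝ) ≤ jb n₃ ^ (1 - s) :=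
    Real.one_le_rpow (one_le_jb _) (by linarith)
  have hpow_nonneg : 0 ≤ jb H ^ ((1:ℝ)/3) := Real.rpow_nonneg (jb_nonneg _) _
  have hpow_nonneg2 : 0 ≤ jb n ^ s := Real.rpow_nonneg (jb_nonneg _) _
  calc jb n₁ ^ s * jb n₂ ^ s
      ≤ (2 * jb n ^ s) * (jb H ^ ((1:ℝ)/3)) := by
        apply mul_le_mul step1 step2 (Real.rpow_nonneg (jb_nonneg _) _)
        positivity
    _ ≤ 2 * jb n ^ s * jb n₃ ^ (1 - s) * jb H ^ ((1:ℝ)/3) := by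
        nlinarith [mul_nonneg (mul_nonneg (by norm_num : (0:ℝ) ≤ 2) hpow_nonneg2) hpow_nonneg]
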